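/- arXiv:2006.02041 — 2 statements merged into one kernel-verified Lean document; each statement's English description precedes it below -/
import Mathlib

section
/- Define the state-evolution map F(τ²) = σ² + (1/δ)·E[(η(B₀ + τZ; ατ) − B₀)²] for τ > 0, where α > 0, δ > 0, σ² ≥ 0, Z ~ N(0,1) independent of B₀ with E[B₀²] < ∞. Then F is monotone nondecreasing in τ², i.e., τ₁ ≤ τ₂ implies F(τ₁²) ≤ F(τ₂²). -/
open MeasureTheory ProbabilityTheory

/-- Soft thresholding function. -/
noncomputable def softThresh (x θ : ℝ) : ℝ :=
  if x > θ then x - θ else if x < -θ then x + θ else 0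

lemma softThresh_key (α b z τ₁ τ₂ : ℝ) (hα : 0 < α) (h1 : 0 < τ₁) (h : τ₁ ≤ τ₂) :
    (softThresh (b + τ₁*z) (α*τ₁) - b)^2 ≤ (softThresh (b + τ₂*z) (α*τ₂) - b)^2 := by
  have h2 : 0 < τ₂ := lt_of_lt_of_le h1 h
  unfold softThresh
  split_ifs with hA1 hB1 hB2 hA2 hB1' hB2' hB1'' hB2''
  · -- A1, B1
    nlinarith [mul_nonneg (sub_nonneg.2 h) (mul_nonneg (by linarith : (0:ℝ) ≤ τ₁ + τ₂)
      (sq_nonneg (z - α)))]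
  · -- A1, B2
    push_neg at hB1
    have hz : z < 0 := by
      by_contra hz; push_neg at hz
      nlinarith [mul_nonneg hz (sub_nonneg.2 h)]
    have hc : 0 ≤ α * τ₁ - τ₁ * z := by nlinarith [mul_nonneg h1.le (by linarith : (0:ℝ) ≤ α - z)]
    have hac : α * τ₁ - τ₁ * z < -(τ₂ * z) - α * τ₂ := by linarith
    have h3 : (0:ℝ) < (-(τ₂ * z) - α * τ₂) - (α * τ₁ - τ₁ * z) := by linarith
    have h4 : (0:ℝ) < (-(τ₂ * z) - α * τ₂) + (α * τ₁ - τ₁ * z) := by linarith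
    nlinarith [mul_pos h3 h4]
  · -- A1, mid₂
    push_neg at hB1 hB2
    have hza : 0 ≤ α - z := by
      by_contra hzz; push_neg at hzz
      nlinarith [mul_nonneg (sub_nonneg.2 h) (by linarith : (0:ℝ) ≤ z - α)]
    have hc : 0 ≤ α * τ₁ - τ₁ * z := by nlinarith [mul_nonneg h1.le hza]
    have h3 : (0:ℝ) < b - (α * τ₁ - τ₁ * z) := by linarith
    have h4 : (0:ℝ) < b + (α * τ₁ - τ₁ * z) := by linarith
    nlinarith [mul_pos h3 h4]
  · -- A2, B1
    have hz : 0 < z := by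
      by_contra hz; push_neg at hz
      nlinarith [mul_nonneg (neg_nonneg.2 hz) (sub_nonneg.2 h)]
    have hc : 0 < τ₁ * z + α * τ₁ := by nlinarith [mul_pos h1 (by linarith : (0:ℝ) < z + α)]
    have h3 : (0:ℝ) < (τ₂ * z - α * τ₂) - (τ₁ * z + α * τ₁) := by linarith
    have h4 : (0:ℝ) < (τ₂ * z - α * τ₂) + (τ₁ * z + α * τ₁) := by linarith
    nlinarith [mul_pos h3 h4]
  · -- A2, B2
    nlinarith [mul_nonneg (sub_nonneg.2 h) (mul_nonneg (by linarith : (0:ℝ) ≤ τ₁ + τ₂)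
      (sq_nonneg (z + α)))]
  · -- A2, mid₂
    push_neg at hB1' hB2'
    have hza : 0 ≤ α + z := by
      by_contra hzz; push_neg at hzz
      nlinarith [mul_nonneg (sub_nonneg.2 h) (by linarith : (0:ℝ) ≤ -(α + z))]
    have hc : 0 ≤ τ₁ * z + α * τ₁ := by nlinarith [mul_nonneg h1.le hza]
    have h3 : (0:ℝ) < -b - (τ₁ * z + α * τ₁) := by linarith
    have h4 : (0:ℝ) < -b + (τ₁ * z + α * τ₁) := by linarith
    nlinarith [mul_pos h3 h4]
  · -- mid₁, B1
    push_neg at hA1 hA2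
    have hz : 0 < z - α := by
      by_contra hzz; push_neg at hzz
      nlinarith [mul_nonneg (sub_nonneg.2 h) (by linarith : (0:ℝ) ≤ α - z)]
    have hb0 : b ≤ 0 := by nlinarith [mul_nonneg h1.le hz.le]
    have ha : 0 < τ₂ * z - α * τ₂ := by nlinarith [mul_pos h2 hz]
    have h3 : (0:ℝ) < (τ₂ * z - α * τ₂) - b := by linarith
    have h4 : (0:ℝ) < (τ₂ * z - α * τ₂) + b := by linarith
    nlinarith [mul_pos h3 h4]
  · -- mid₁, B2
    push_neg at hA1 hA2
    have hz : z + α < 0 := by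
      by_contra hzz; push_neg at hzz
      nlinarith [mul_nonneg (sub_nonneg.2 h) (by linarith : (0:ℝ) ≤ z + α)]
    have hb0 : 0 ≤ b := by nlinarith [mul_nonneg h1.le (by linarith : (0:ℝ) ≤ -(z + α))]
    have ha : 0 < -(τ₂ * z) - α * τ₂ := by nlinarith [mul_pos h2 (by linarith : (0:ℝ) < -(z + α))]
    have h3 : (0:ℝ) < (-(τ₂ * z) - α * τ₂) - b := by linarith
    have h4 : (0:ℝ) < (-(τ₂ * z) - α * τ₂) + b := by linarith
    nlinarith [mul_pos h3 h4]
  · -- mid₁, mid₂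
    exact le_rfl

lemma softThresh_bound (x θ b : ℝ) (hθ : 0 ≤ θ) :
    (softThresh x θ - b)^2 ≤ 2*x^2 + 2*b^2 := by
  unfold softThresh
  split_ifs with hx1 hx2
  · nlinarith [sq_nonneg (x - θ + b), mul_nonneg hθ (by linarith : (0:ℝ) ≤ 2*x - θ)]
  · nlinarith [sq_nonneg (x + θ + b), mul_nonneg hθ (by linarith : (0:ℝ) ≤ -(2*x + θ))]
  · nlinarith [sq_nonneg x, sq_nonneg b]

lemma softThresh_measurable (θ : ℝ) : Measurable (fun x : ℝ => softThresh x θ) := by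
  unfold softThresh
  exact Measurable.ite (measurableSet_lt measurable_const measurable_id)
    (measurable_id.sub measurable_const)
    (Measurable.ite (measurableSet_lt measurable_id measurable_const)
      (measurable_id.add measurable_const) measurable_const)

lemma integrable_sq_gaussian : Integrable (fun x : ℝ => x^2) (gaussianReal 0 1) := by
  rw [gaussianReal_of_var_ne_zero _ one_ne_zero,
    integrable_withDensity_iff (measurable_gaussianPDF _ _)
      (ae_of_all _ fun x => ENNReal.ofReal_lt_top)]
  have heq : (fun x : ℝ => x^2 * (gaussianPDF 0 1 x).toReal) =
      fun x : ℝ => (√(2*Real.pi))⁻¹ * (x ^ (2:ℝ) * Real.exp (-(2⁻¹) * x^2)) := by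
    ext x
    rw [gaussianPDF, ENNReal.toReal_ofReal (gaussianPDFReal_nonneg _ _ _), gaussianPDFReal,
      Real.rpow_two]
    push_cast
    rw [mul_one, mul_one, sub_zero]
    ring_nf
  rw [heq]
  exact (integrable_rpow_mul_exp_neg_mul_sq (by norm_num : (0:ℝ) < 2⁻¹)
    (by norm_num : (-1:ℝ) < 2)).const_mul _

/-- The state-evolution map `F(τ²) = σ² + (1/δ) E[(η(B₀ + τZ; ατ) − B₀)²]` is monotone
nondecreasing in `τ²`: if `0 < τ₁ ≤ τ₂` then `F(τ₁²) ≤ F(τ₂²)`. Here `Z ~ N(0,1)` is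
independent of `B₀`, which has finite second moment. -/
theorem stateEvolution_monotone {Ω : Type*} [MeasureSpace Ω]
    (μ : Measure Ω) [IsProbabilityMeasure μ]
    (B₀ Z : Ω → ℝ) (hB : Measurable B₀) (hZ : Measurable Z)
    (hZlaw : μ.map Z = gaussianReal 0 1)
    (hindep : ProbabilityTheory.IndepFun B₀ Z μ)
    (hB2 : Integrable (fun ω => (B₀ ω)^2) μ)
    (α δ σ2 : ℝ) (hα : 0 < α) (hδ : 0 < δ) (hσ : 0 ≤ σ2)
    (τ₁ τ₂ : ℝ) (hτ₁ : 0 < τ₁) (hττ : τ₁ ≤ τ₂) :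
    σ2 + (1/δ) * ∫ ω, (softThresh (B₀ ω + τ₁ * Z ω) (α * τ₁) - B₀ ω)^2 ∂μ ≤
    σ2 + (1/δ) * ∫ ω, (softThresh (B₀ ω + τ₂ * Z ω) (α * τ₂) - B₀ ω)^2 ∂μ := by
  have hτ₂ : 0 < τ₂ := lt_of_lt_of_le hτ₁ hττ
  -- integrability of Z²
  have hZ2 : Integrable (fun ω => (Z ω)^2) μ := by
    have hg := integrable_sq_gaussian
    rw [← hZlaw] at hg
    have := (integrable_map_measure
      (Measurable.aestronglyMeasurable (by measurability)) hZ.aemeasurable).mp hg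
    exact this
  -- measurability of the integrand
  have hmeas : Measurable (fun ω => (softThresh (B₀ ω + τ₂ * Z ω) (α * τ₂) - B₀ ω)^2) :=
    (((softThresh_measurable (α * τ₂)).comp (hB.add (hZ.const_mul τ₂))).sub hB).pow_const 2
  -- integrability of the larger integrand
  have hint : Integrable (fun ω => (softThresh (B₀ ω + τ₂ * Z ω) (α * τ₂) - B₀ ω)^2) μ := by
    refine Integrable.mono' (g := fun ω => 6*(B₀ ω)^2 + 4*τ₂^2*(Z ω)^2)
      (((hB2.const_mul 6)).add ((hZ2.const_mul (4*τ₂^2)).congr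
        (ae_of_all _ fun ω => by ring))) hmeas.aestronglyMeasurable
      (ae_of_all _ fun ω => ?_)
    rw [Real.norm_eq_abs, abs_of_nonneg (sq_nonneg _)]
    show _ ≤ 6*(B₀ ω)^2 + 4*τ₂^2*(Z ω)^2
    have h1 := softThresh_bound (B₀ ω + τ₂ * Z ω) (α * τ₂) (B₀ ω)
      (mul_nonneg hα.le hτ₂.le)
    nlinarith [sq_nonneg (B₀ ω - τ₂ * Z ω)]
  refine add_le_add_right (mul_le_mul_of_nonneg_left ?_ (by positivity)) σ2
  exact integral_mono_of_nonneg (ae_of_all _ fun ω => sq_nonneg _) hint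
    (ae_of_all _ fun ω => softThresh_key α (B₀ ω) (Z ω) τ₁ τ₂ hα hτ₁ hττ)
end

section
/- For each fixed z ∈ ℝ, α ≥ 0, and b ∈ ℝ, the function τ ↦ (η(b + τz; ατ) − b)², defined for τ > 0, equals τ²·(η(b/τ + z; α) − b/τ)², and the function s ↦ s·(η(b·s^{-1/2}+z; α) − b·s^{-1/2})² (with s = τ²) is nondecreasing in s > 0. -/
lemma softThresh_smul (c x θ : ℝ) (hc : 0 < c) :
    softThresh (c * x) (c * θ) = c * softThresh x θ := by
  unfold softThresh
  have e1 : (c * x > c * θ) ↔ (x > θ) := mul_lt_mul_iff_right₀ hc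
  have e2 : (c * x < -(c * θ)) ↔ (x < -θ) := by rw [← mul_neg]; exact mul_lt_mul_iff_right₀ hc
  simp only [e1, e2]
  split_ifs <;> ring

lemma scaling (z α b τ : ℝ) (hτ : 0 < τ) :
    (softThresh (b + τ * z) (α * τ) - b)^2 =
      τ^2 * (softThresh (b / τ + z) α - b / τ)^2 := by
  have h : b + τ * z = τ * (b / τ + z) := by rw [mul_add, mul_div_cancel₀ _ hτ.ne', mul_comm τ z]
  have h2 : α * τ = τ * α := by ring
  rw [h, h2, softThresh_smul _ _ _ hτ]
  have hb : b = τ * (b / τ) := by field_simp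
  nth_rewrite 2 [hb]
  ring

lemma mono (z α b : ℝ) (hα : 0 ≤ α) (τ₁ τ₂ : ℝ) (h1 : 0 < τ₁) (h12 : τ₁ ≤ τ₂) :
    (softThresh (b + τ₁ * z) (α * τ₁) - b)^2 ≤ (softThresh (b + τ₂ * z) (α * τ₂) - b)^2 := by
  have h2 : 0 < τ₂ := lt_of_lt_of_le h1 h12
  unfold softThresh
  split_ifs with a1 a2 a3 a4 a5 a6 a7 a8 <;> try push_neg at *
  -- 1: reg1, reg1
  · nlinarith [mul_nonneg hα h1.le, mul_nonneg hα h2.le,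
      mul_le_mul_of_nonneg_right h12 hα, sq_nonneg (τ₂*(z-α) - τ₁*(z-α)),
      sq_nonneg (τ₂*(z-α) + τ₁*(z-α))]
  -- 2: reg1, reg2
  · have hz : z < 0 := by nlinarith [mul_nonneg hα h1.le, mul_nonneg hα h2.le]
    have hA : 0 < α * τ₁ - τ₁ * z := by nlinarith
    have hB : α * τ₁ - τ₁ * z < -(τ₂ * z) - α * τ₂ := by nlinarith
    nlinarith [hA, hB]
  -- 3: reg1, mid
  · rcases le_or_gt z α with hz | hz
    · have h0 : 0 ≤ τ₁ * (α - z) := mul_nonneg h1.le (by linarith)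
      have hb : τ₁ * (α - z) < b := by nlinarith
      nlinarith
    · exfalso
      have : τ₂ * (α - z) ≤ τ₁ * (α - z) := by nlinarith
      nlinarith
  -- 4: reg2, reg1
  · have hz : 0 < z := by nlinarith [mul_nonneg hα h1.le, mul_nonneg hα h2.le]
    have hA : 0 < τ₁ * z + α * τ₁ := by nlinarith
    have hB : τ₁ * z + α * τ₁ < τ₂ * z - α * τ₂ := by nlinarith
    nlinarith [hA, hB]
  -- 5: reg2, reg2
  · nlinarith [mul_nonneg hα h1.le, mul_nonneg hα h2.le,
      mul_le_mul_of_nonneg_right h12 hα, sq_nonneg (τ₂*(z+α) - τ₁*(z+α)),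
      sq_nonneg (τ₂*(z+α) + τ₁*(z+α))]
  -- 6: reg2, mid
  · rcases le_or_gt (-α) z with hz | hz
    · have h0 : 0 ≤ τ₁ * (z + α) := mul_nonneg h1.le (by linarith)
      have hb : b < -(τ₁ * (z + α)) := by nlinarith
      nlinarith
    · exfalso
      have : τ₁ * (z + α) ≤ τ₂ * (z + α) := by nlinarith
      nlinarith
  -- 7: mid, reg1
  · have hz : α < z := by nlinarith
    have hb : b ≤ τ₁ * (α - z) := by nlinarith
    have hb2 : -b < τ₂ * (z - α) := by nlinarith
    nlinarith [mul_pos h1 (show (0:ℝ) < z - α by linarith)]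
  -- 8: mid, reg2
  · have hz : z + α < 0 := by nlinarith
    have hb : -(τ₁ * (z + α)) ≤ b := by nlinarith
    have hb2 : b < -(τ₂ * (z + α)) := by nlinarith
    nlinarith [mul_pos h1 (show (0:ℝ) < -(z + α) by linarith)]
  -- 9: mid, mid
  · exact le_refl _

/-- Scaling identity and monotonicity in the noise level: for fixed `z`, `α ≥ 0`, `b`,
`(η(b+τz;ατ) − b)² = τ² (η(b/τ+z;α) − b/τ)²` for `τ > 0`, and
`s ↦ s (η(b/√s + z; α) − b/√s)²` is nondecreasing on `(0,∞)`. -/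
theorem softThresh_scaling_and_monotone (z α b : ℝ) (hα : 0 ≤ α) :
    (∀ τ : ℝ, 0 < τ →
      (softThresh (b + τ * z) (α * τ) - b)^2 =
        τ^2 * (softThresh (b / τ + z) α - b / τ)^2) ∧
    (∀ s₁ s₂ : ℝ, 0 < s₁ → s₁ ≤ s₂ →
      s₁ * (softThresh (b / Real.sqrt s₁ + z) α - b / Real.sqrt s₁)^2 ≤
      s₂ * (softThresh (b / Real.sqrt s₂ + z) α - b / Real.sqrt s₂)^2) := by
  constructor
  · exact fun τ hτ => scaling z α b τ hτ
  · intro s₁ s₂ hs₁ hs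
    have hs₂ : 0 < s₂ := lt_of_lt_of_le hs₁ hs
    have ht₁ : 0 < Real.sqrt s₁ := Real.sqrt_pos.mpr hs₁
    have ht₂ : 0 < Real.sqrt s₂ := Real.sqrt_pos.mpr hs₂
    have e₁ : s₁ = (Real.sqrt s₁)^2 := (Real.sq_sqrt hs₁.le).symm
    have e₂ : s₂ = (Real.sqrt s₂)^2 := (Real.sq_sqrt hs₂.le).symm
    calc s₁ * (softThresh (b / Real.sqrt s₁ + z) α - b / Real.sqrt s₁)^2
        = (softThresh (b + Real.sqrt s₁ * z) (α * Real.sqrt s₁) - b)^2 := by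
          rw [scaling z α b _ ht₁, ← e₁]
      _ ≤ (softThresh (b + Real.sqrt s₂ * z) (α * Real.sqrt s₂) - b)^2 :=
          mono z α b hα _ _ ht₁ (Real.sqrt_le_sqrt hs)
      _ = s₂ * (softThresh (b / Real.sqrt s₂ + z) α - b / Real.sqrt s₂)^2 := by
          rw [scaling z α b _ ht₂, ← e₂]
end
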